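/- For 0 < α < 1 and n = 2m an even positive integer, the Hadamard finite-part integral f.p.∫_0^∞ x^{α-1-n}/(1+x²) dx equals (−1)^m (π/2)/sin(πα/2). -/

import Mathlib

open MeasureTheory Real Set Filter Topology

noncomputable def cc : ℕ → ℝ := fun n => if Even n then (-1 : ℝ)^(n/2) else 0

lemma abs_cc_le (n : ℕ) : ‖cc n‖ ≤ 1 := by
  unfold cc; split <;> simp

lemma hasFPS : HasFPowerSeriesOnBall (fun x : ℝ => 1/(1+x^2))
    (FormalMultilinearSeries.ofScalars ℝ cc) 0 1 := by
  constructor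
  · refine FormalMultilinearSeries.le_radius_of_bound _ 1 fun n => ?_
    rw [FormalMultilinearSeries.ofScalars_norm]
    simpa using abs_cc_le n
  · norm_num
  · intro y hy
    simp only [EMetric.mem_ball, edist_dist, Real.dist_eq, sub_zero] at hy
    have hy1 : |y| < 1 := by
      rwa [← ENNReal.ofReal_one, ENNReal.ofReal_lt_ofReal_iff one_pos] at hy
    have hgeom : HasSum (fun j : ℕ => (-(y^2))^j) ((1 - (-(y^2)))⁻¹) := by
      apply hasSum_geometric_of_norm_lt_one
      rw [norm_neg, norm_pow]
      have : ‖y‖ = |y| := rfl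
      nlinarith [abs_nonneg y]
    have h2 : HasSum (fun j : ℕ => cc (2*j) * y^(2*j)) (1/(1+y^2)) := by
      have : ∀ j : ℕ, cc (2*j) * y^(2*j) = (-(y^2))^j := by
        intro j
        unfold cc
        simp only [even_two_mul j, if_pos]
        rw [neg_pow, pow_mul, Nat.mul_div_cancel_left j two_pos]
        ring
      simp only [this]
      convert hgeom using 1
      rw [sub_neg_eq_add, one_div]
    have h3 : HasSum (fun n : ℕ => cc n * y^n) (1/(1+y^2)) := by
      apply (Function.Injective.hasSum_iff (f := fun n : ℕ => cc n * y^n)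
        (g := fun j => 2*j) (fun a b h => by simpa using h) ?_).mp h2
      intro n hn
      have hodd : ¬ Even n := by
        simp only [Set.mem_range, not_exists] at hn
        intro ⟨r, hr⟩; exact hn r (by omega)
      simp [cc, hodd]
    simpa only [FormalMultilinearSeries.ofScalars_apply_eq, smul_eq_mul, zero_add] using h3

lemma iterDeriv_eq (k : ℕ) :
    iteratedDeriv k (fun x : ℝ => 1/(1+x^2)) 0 = (k.factorial : ℝ) * cc k := by
  have h := hasFPS.factorial_smul (1 : ℝ) k
  rw [FormalMultilinearSeries.ofScalars_apply_eq] at h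
  rw [iteratedDeriv_eq_iteratedFDeriv, ← h]
  simp [mul_comm]

-- substitution x ↦ x/(1+x) : Ioi 0 → Ioo 0 1
lemma image_div_one_add : (fun u : ℝ => u/(1+u)) '' Ioi 0 = Ioo 0 1 := by
  ext x
  constructor
  · rintro ⟨u, hu, rfl⟩
    have h1 : (0:ℝ) < 1 + u := by linarith [mem_Ioi.mp hu]
    have hu0 := mem_Ioi.mp hu
    constructor
    · positivity
    · rw [div_lt_one h1]; linarith
  · rintro ⟨hx0, hx1⟩
    refine ⟨x/(1-x), ?_, ?_⟩
    · have h1x : (0:ℝ) < 1 - x := by linarith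
      exact mem_Ioi.mpr (by positivity)
    · have h1 : (1:ℝ) - x ≠ 0 := by linarith
      field_simp
      ring

lemma injOn_div_one_add : InjOn (fun u : ℝ => u/(1+u)) (Ioi 0) := by
  intro a ha b hb h
  have ha1 : (0:ℝ) < 1 + a := by linarith [mem_Ioi.mp ha]
  have hb1 : (0:ℝ) < 1 + b := by linarith [mem_Ioi.mp hb]
  field_simp at h
  linarith

lemma beta_real (s : ℝ) (hs0 : 0 < s) (hs1 : s < 1) :
    ∫ u in Ioi (0:ℝ), u^(s-1)/(1+u) = π / Real.sin (π * s) := by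
  have hbeta : Complex.betaIntegral s (1-s) =
      ((π / Real.sin (π * s) : ℝ) : ℂ) := by
    have h1 : Complex.Gamma s * Complex.Gamma (1-s)
        = Complex.Gamma (s + (1-s)) * Complex.betaIntegral s (1-s) :=
      Complex.Gamma_mul_Gamma_eq_betaIntegral (by simpa using hs0)
        (by simp [Complex.sub_re]; simpa using hs1)
    rw [show (s:ℂ) + (1 - s) = 1 by ring, Complex.Gamma_one, one_mul] at h1
    rw [← h1, show (1:ℂ) - (s:ℂ) = ((1-s:ℝ):ℂ) by push_cast; ring,
      Complex.Gamma_ofReal, Complex.Gamma_ofReal, ← Complex.ofReal_mul,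
      Real.Gamma_mul_Gamma_one_sub]
  have hcongr : Complex.betaIntegral s (1-s) =
      ((∫ x in (0:ℝ)..1, x^(s-1) * (1-x)^(-s) : ℝ) : ℂ) := by
    rw [Complex.betaIntegral, ← intervalIntegral.integral_ofReal]
    apply intervalIntegral.integral_congr
    intro x hx
    rw [uIcc_of_le (by norm_num : (0:ℝ) ≤ 1)] at hx
    obtain ⟨hx0, hx1⟩ := hx
    push_cast
    rw [show (s:ℂ)-1 = ((s-1:ℝ):ℂ) by push_cast; ring,
      ← Complex.ofReal_cpow hx0,
      show (1:ℂ) - (x:ℂ) = ((1-x:ℝ):ℂ) by push_cast; ring,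
      show (1:ℂ) - (s:ℂ) - 1 = ((-s:ℝ):ℂ) by push_cast; ring,
      ← Complex.ofReal_cpow (by linarith : (0:ℝ) ≤ 1 - x)]
  have hIoo : (∫ x in (0:ℝ)..1, x^(s-1) * (1-x)^(-s) : ℝ)
      = ∫ x in Ioo (0:ℝ) 1, x^(s-1) * (1-x)^(-s) := by
    rw [intervalIntegral.integral_of_le (by norm_num), integral_Ioc_eq_integral_Ioo]
  have hsub : ∫ x in Ioo (0:ℝ) 1, x^(s-1) * (1-x)^(-s)
      = ∫ u in Ioi (0:ℝ), u^(s-1)/(1+u) := by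
    rw [← image_div_one_add]
    rw [integral_image_eq_integral_abs_deriv_smul measurableSet_Ioi
      (f' := fun u => 1/(1+u)^2) ?_ injOn_div_one_add]
    · apply setIntegral_congr_fun measurableSet_Ioi
      intro u hu
      have hu0 := mem_Ioi.mp hu
      have h1 : (0:ℝ) < 1 + u := by linarith
      have h2 : (1:ℝ) - u/(1+u) = 1/(1+u) := by field_simp; ring
      simp only [smul_eq_mul]
      have e3 : (1/(1+u))^(-s) = (1+u)^s := by
        rw [one_div, Real.inv_rpow h1.le, ← Real.rpow_neg h1.le, neg_neg]
      have e4 : (1+u)^s = (1+u)^(s-1) * (1+u) := by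
        have := Real.rpow_add h1 (s-1) 1
        simpa using this
      have hp : (0:ℝ) < (1+u)^(s-1) := Real.rpow_pos_of_pos h1 _
      rw [h2, Real.div_rpow hu0.le h1.le, e3, e4, abs_of_pos (by positivity)]
      field_simp
    · intro u hu
      have h1 : (1:ℝ) + u ≠ 0 := by have := mem_Ioi.mp hu; positivity
      have : HasDerivAt (fun u : ℝ => u/(1+u)) ((1*(1+u) - u*1)/(1+u)^2) u :=
        (hasDerivAt_id u).div ((hasDerivAt_id u).const_add 1) h1
      simpa using this.hasDerivWithinAt
  rw [← hsub, ← hIoo]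
  have := hcongr.symm.trans hbeta
  exact_mod_cast this

lemma image_sq : (fun x : ℝ => x^2) '' Ioi 0 = Ioi 0 := by
  ext u
  constructor
  · rintro ⟨x, hx, rfl⟩
    exact mem_Ioi.mpr (pow_pos (mem_Ioi.mp hx) 2)
  · intro hu
    have hu0 := mem_Ioi.mp hu
    exact ⟨Real.sqrt u, mem_Ioi.mpr (Real.sqrt_pos.mpr hu0), Real.sq_sqrt hu0.le⟩

lemma main_int (α : ℝ) (hα0 : 0 < α) (hα1 : α < 1) :
    ∫ x in Ioi (0:ℝ), x^(α-1)/(1+x^2) = (π/2) / Real.sin (π * α / 2) := by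
  have hb := beta_real (α/2) (by linarith) (by linarith)
  rw [← image_sq] at hb
  rw [integral_image_eq_integral_abs_deriv_smul measurableSet_Ioi
    (f' := fun x => 2*x) ?_ ?_] at hb
  · have hcong : ∫ x in Ioi (0:ℝ), |2*x| • ((x^2)^(α/2-1)/(1+x^2))
        = ∫ x in Ioi (0:ℝ), 2 * (x^(α-1)/(1+x^2)) := by
      apply setIntegral_congr_fun measurableSet_Ioi
      intro x hx
      have hx0 := mem_Ioi.mp hx
      simp only [smul_eq_mul]
      have e1 : (x^2 : ℝ)^(α/2-1) = x^(α-2) := by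
        rw [← Real.rpow_natCast x 2, ← Real.rpow_mul hx0.le,
          show ((2:ℕ):ℝ)*(α/2-1) = α-2 by push_cast; ring]
      have e2 : x * x^(α-2) = x^(α-1) := by
        have := Real.rpow_add hx0 (α-2) 1
        rw [Real.rpow_one] at this
        rw [show α - 1 = α - 2 + 1 by ring, this]
        ring
      rw [e1, abs_of_pos (by positivity)]
      rw [← e2]; ring
    rw [hcong, integral_const_mul] at hb
    have hsin : Real.sin (π * α / 2) ≠ 0 := by
      apply ne_of_gt
      apply Real.sin_pos_of_pos_of_lt_pi
      · positivity
      · nlinarith [Real.pi_pos]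
    rw [show π * (α/2) = π * α / 2 by ring, eq_div_iff hsin] at hb
    rw [div_div, eq_div_iff (by positivity : (2:ℝ) * Real.sin (π * α / 2) ≠ 0)]
    linear_combination hb
  · intro x hx
    have := hasDerivAt_pow 2 x
    simpa using this.hasDerivWithinAt
  · intro a ha b hb h
    have ha0 := mem_Ioi.mp ha
    have hb0 := mem_Ioi.mp hb
    simp only at h
    nlinarith

lemma tail_integrable {e q : ℝ} (he : 0 < e) (hq : q < 1) :
    IntegrableOn (fun x : ℝ => x^q/(1+x^2)) (Ioi e) := by
  have hg : IntegrableOn (fun x : ℝ => x^(q-2)) (Ioi e) :=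
    integrableOn_Ioi_rpow_of_lt (by linarith) he
  apply Integrable.mono hg
  · apply ContinuousOn.aestronglyMeasurable _ measurableSet_Ioi
    apply ContinuousOn.div
    · exact fun x hx => (Real.continuousAt_rpow_const x q
        (Or.inl (ne_of_gt (he.trans (mem_Ioi.mp hx))))).continuousWithinAt
    · fun_prop
    · intro x _; positivity
  · rw [ae_restrict_iff' measurableSet_Ioi]
    filter_upwards with x
    intro hx
    have hx0 : 0 < x := he.trans (mem_Ioi.mp hx)
    have h1 : (0:ℝ) < x^q := Real.rpow_pos_of_pos hx0 q
    rw [Real.norm_eq_abs, Real.norm_eq_abs, abs_of_pos (by positivity),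
      abs_of_pos (Real.rpow_pos_of_pos hx0 _)]
    have e1 : x^(q-2) = x^q/x^2 := by
      rw [Real.rpow_sub hx0, show (2:ℝ) = ((2:ℕ):ℝ) by norm_num,
        Real.rpow_natCast]
    rw [e1]
    apply div_le_div_of_nonneg_left h1.le (by positivity)
    nlinarith

lemma step_id {e b : ℝ} (he : 0 < e) (hb : b < 1) :
    ∫ x in Ioi e, x^(b-2)/(1+x^2)
      = e^(b-1)/(1-b) - ∫ x in Ioi e, x^b/(1+x^2) := by
  have h1 : IntegrableOn (fun x : ℝ => x^(b-2)) (Ioi e) :=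
    integrableOn_Ioi_rpow_of_lt (by linarith) he
  have h2 : IntegrableOn (fun x : ℝ => x^b/(1+x^2)) (Ioi e) :=
    tail_integrable he hb
  have key : ∀ x ∈ Ioi e, x^(b-2)/(1+x^2) = x^(b-2) - x^b/(1+x^2) := by
    intro x hx
    have hx0 : 0 < x := he.trans (mem_Ioi.mp hx)
    have e1 : x^b = x^(b-2) * x^2 := by
      rw [← Real.rpow_natCast x 2, ← Real.rpow_add hx0]
      norm_num
    have h12 : (0:ℝ) < 1 + x^2 := by positivity
    rw [e1]
    field_simp [e1]
    ring
  rw [setIntegral_congr_fun measurableSet_Ioi key, integral_sub h1 h2,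
    integral_Ioi_rpow_of_lt (by linarith : b - 2 < -1) he]
  rw [show b-2+1 = b-1 by ring]
  have h3 : b - 1 ≠ 0 := by linarith
  have h4 : (1:ℝ) - b ≠ 0 := by linarith
  rw [sub_left_inj, div_eq_div_iff h3 h4]
  ring

lemma expand_int (α : ℝ) (hα1 : α < 1) (m : ℕ) {e : ℝ} (he : 0 < e) :
    ∀ k, k ≤ m →
    ∫ x in Ioi e, x^(α-1-2*(m:ℝ))/(1+x^2)
      = (∑ j ∈ Finset.range k, (-1:ℝ)^j * (e^(α-2*(m:ℝ)+2*(j:ℝ))/(2*(m:ℝ)-2*(j:ℝ)-α)))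
        + (-1:ℝ)^k * ∫ x in Ioi e, x^(α-1-2*(m:ℝ)+2*(k:ℝ))/(1+x^2) := by
  intro k
  induction k with
  | zero =>
    intro _
    norm_num
  | succ n ih =>
    intro hn
    have hstep := step_id (e := e) (b := α+1-2*(m:ℝ)+2*(n:ℝ)) he
      (by have : (n:ℝ) + 1 ≤ (m:ℝ) := by exact_mod_cast hn
          linarith)
    rw [show α+1-2*(m:ℝ)+2*(n:ℝ)-2 = α-1-2*(m:ℝ)+2*(n:ℝ) by ring] at hstep
    rw [ih (by omega), hstep, Finset.sum_range_succ]
    rw [show α+1-2*(m:ℝ)+2*(n:ℝ)-1 = α-2*(m:ℝ)+2*(n:ℝ) by ring,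
      show 1-(α+1-2*(m:ℝ)+2*(n:ℝ)) = 2*(m:ℝ)-2*(n:ℝ)-α by ring,
      show α+1-2*(m:ℝ)+2*(n:ℝ) = α-1-2*(m:ℝ)+2*((n:ℝ)+1) by ring]
    push_cast
    ring

lemma sum_pair (m : ℕ) (g : ℕ → ℝ) :
    ∑ k ∈ Finset.range (2*m), g k = ∑ j ∈ Finset.range m, (g (2*j) + g (2*j+1)) := by
  induction m with
  | zero => simp
  | succ n ih =>
    rw [Finset.sum_range_succ, ← ih, show 2*(n+1) = (2*n)+1+1 by ring,
      Finset.sum_range_succ, Finset.sum_range_succ]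
    ring

lemma cc_even (j : ℕ) : cc (2*j) = (-1:ℝ)^j := by
  simp [cc, even_two_mul, Nat.mul_div_cancel_left j two_pos]

lemma cc_odd (j : ℕ) : cc (2*j+1) = 0 := by
  simp [cc, Nat.even_add_one, parity_simps]

lemma sum_eq (α : ℝ) (m : ℕ) (e : ℝ) :
    ∑ k ∈ Finset.range (2*m),
        e ^ (α - (2*m:ℕ) + k) * iteratedDeriv k (fun x : ℝ => 1/(1+x^2)) 0 /
          ((k.factorial : ℝ) * (((2*m:ℕ):ℝ) - α - k))
      = ∑ j ∈ Finset.range m,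
          (-1:ℝ)^j * (e^(α-2*(m:ℝ)+2*(j:ℝ))/(2*(m:ℝ)-2*(j:ℝ)-α)) := by
  rw [sum_pair]
  apply Finset.sum_congr rfl
  intro j _
  rw [iterDeriv_eq, iterDeriv_eq, cc_even, cc_odd, mul_zero, mul_zero, zero_div,
    add_zero]
  have hF : ((2*j).factorial : ℝ) ≠ 0 := by
    exact_mod_cast Nat.factorial_ne_zero (2*j)
  push_cast
  rw [show e^(α-2*(m:ℝ)+2*(j:ℝ)) * (((2*j).factorial:ℝ) * (-1:ℝ)^j)
      = ((2*j).factorial:ℝ) * (e^(α-2*(m:ℝ)+2*(j:ℝ)) * (-1:ℝ)^j) by ring,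
    mul_div_mul_left _ _ hF]
  rw [show 2*(m:ℝ)-2*(j:ℝ)-α = 2*(m:ℝ)-α-2*(j:ℝ) by ring]
  ring

lemma tendsto_tail (α : ℝ) (hα0 : 0 < α) (hα1 : α < 1) :
    Tendsto (fun e : ℝ => ∫ x in Ioi e, x^(α-1)/(1+x^2)) (𝓝[>] (0:ℝ))
      (𝓝 ((π/2) / Real.sin (π * α / 2))) := by
  set f0 : ℝ → ℝ := fun x => x^(α-1)/(1+x^2) with hf0
  have hrpow_int : ∀ e : ℝ, 0 < e → IntegrableOn (fun x : ℝ => x^(α-1)) (Ioc 0 e) := by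
    intro e he
    exact (intervalIntegrable_iff_integrableOn_Ioc_of_le he.le).mp
      (intervalIntegral.intervalIntegrable_rpow' (by linarith))
  have hbd : ∀ x ∈ Ioc (0:ℝ) 1 ∪ Ioi (0:ℝ), True := fun _ _ => trivial
  have i2 : IntegrableOn f0 (Ioc 0 1) := by
    apply Integrable.mono (hrpow_int 1 one_pos)
    · apply ContinuousOn.aestronglyMeasurable _ measurableSet_Ioc
      apply ContinuousOn.div
      · exact fun x hx => (Real.continuousAt_rpow_const x (α-1)
          (Or.inl (ne_of_gt hx.1))).continuousWithinAt
      · fun_prop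
      · intro x _; positivity
    · rw [ae_restrict_iff' measurableSet_Ioc]
      filter_upwards with x hx
      have hx0 : 0 < x := hx.1
      have h1 : (0:ℝ) < x^(α-1) := Real.rpow_pos_of_pos hx0 _
      rw [Real.norm_eq_abs, Real.norm_eq_abs, abs_of_pos (by positivity),
        abs_of_pos h1]
      exact div_le_self h1.le (by nlinarith)
  have i1 : IntegrableOn f0 (Ioi 1) := tail_integrable one_pos (by linarith)
  have i0 : IntegrableOn f0 (Ioi 0) := by
    rw [← Ioc_union_Ioi_eq_Ioi (zero_le_one)]
    exact i2.union i1
  have hsplit : ∀ e : ℝ, 0 < e →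
      ∫ x in Ioi e, f0 x = (∫ x in Ioi 0, f0 x) - ∫ x in Ioc 0 e, f0 x := by
    intro e he
    have : (∫ x in Ioi (0:ℝ), f0 x)
        = (∫ x in Ioc 0 e, f0 x) + ∫ x in Ioi e, f0 x := by
      rw [← setIntegral_union (Ioc_disjoint_Ioi le_rfl) measurableSet_Ioi
        (i0.mono_set Ioc_subset_Ioi_self) (i0.mono_set (Ioi_subset_Ioi he.le)),
        Ioc_union_Ioi_eq_Ioi he.le]
    linarith
  have hsmall : Tendsto (fun e : ℝ => ∫ x in Ioc 0 e, f0 x) (𝓝[>] (0:ℝ)) (𝓝 0) := by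
    have hup : ∀ e ∈ Ioo (0:ℝ) 1, (∫ x in Ioc 0 e, f0 x) ≤ e^α/α := by
      intro e he
      have h1 : (∫ x in Ioc 0 e, f0 x) ≤ ∫ x in Ioc (0:ℝ) e, x^(α-1) := by
        apply setIntegral_mono_on
          (i0.mono_set Ioc_subset_Ioi_self) (hrpow_int e he.1) measurableSet_Ioc
        intro x hx
        have hx0 : 0 < x := hx.1
        exact div_le_self (Real.rpow_pos_of_pos hx0 _).le (by nlinarith)
      have h2 : (∫ x in Ioc (0:ℝ) e, x^(α-1)) = e^α/α := by
        rw [← intervalIntegral.integral_of_le he.1.le,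
          integral_rpow (Or.inl (by linarith : (-1:ℝ) < α - 1))]
        rw [show α - 1 + 1 = α by ring, Real.zero_rpow (ne_of_gt hα0)]
        ring
      linarith
    have hlo : ∀ e ∈ Ioo (0:ℝ) 1, 0 ≤ ∫ x in Ioc 0 e, f0 x := by
      intro e he
      apply setIntegral_nonneg measurableSet_Ioc
      intro x hx
      have hx0 : 0 < x := hx.1
      positivity
    have hups : Tendsto (fun e : ℝ => e^α/α) (𝓝[>] (0:ℝ)) (𝓝 0) := by
      have : Tendsto (fun e : ℝ => e^α) (𝓝 (0:ℝ)) (𝓝 ((0:ℝ)^α)) :=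
        (Real.continuousAt_rpow_const 0 α (Or.inr hα0.le)).tendsto
      rw [Real.zero_rpow (ne_of_gt hα0)] at this
      simpa using (this.mono_left nhdsWithin_le_nhds).div_const α
    apply tendsto_of_tendsto_of_tendsto_of_le_of_le' tendsto_const_nhds hups
    · filter_upwards [Ioo_mem_nhdsGT_of_mem (by norm_num : (0:ℝ) ∈ Ico (0:ℝ) 1)]
        with e he using hlo e he
    · filter_upwards [Ioo_mem_nhdsGT_of_mem (by norm_num : (0:ℝ) ∈ Ico (0:ℝ) 1)]
        with e he using hup e he
  have hval := main_int α hα0 hα1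
  have h0 : Tendsto (fun e : ℝ => (∫ x in Ioi 0, f0 x) - ∫ x in Ioc 0 e, f0 x)
      (𝓝[>] (0:ℝ)) (𝓝 ((∫ x in Ioi 0, f0 x) - 0)) :=
    tendsto_const_nhds.sub hsmall
  rw [sub_zero] at h0
  have h2 : Tendsto (fun e : ℝ => ∫ x in Ioi e, f0 x) (𝓝[>] (0:ℝ))
      (𝓝 (∫ x in Ioi 0, f0 x)) := by
    apply h0.congr'
    filter_upwards [self_mem_nhdsWithin] with e he
    exact (hsplit e he).symm
  rwa [hval] at h2

theorem stmt_9 (α : ℝ) (hα0 : 0 < α) (hα1 : α < 1) (m : ℕ) (hm : 1 ≤ m) :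
    Tendsto (fun e : ℝ =>
        (∫ x in Ioi e, x ^ (α - 1 - (2 * m : ℕ)) / (1 + x ^ 2)) -
          ∑ k ∈ Finset.range (2 * m),
            e ^ (α - (2 * m : ℕ) + k) *
              iteratedDeriv k (fun x : ℝ => 1 / (1 + x ^ 2)) 0 /
                ((k.factorial : ℝ) * (((2 * m : ℕ) : ℝ) - α - k)))
      (𝓝[>] 0)
      (𝓝 ((-1) ^ m * (Real.pi / 2) / Real.sin (Real.pi * α / 2))) := by
  have key : ∀ e : ℝ, 0 < e →
      (∫ x in Ioi e, x ^ (α - 1 - (2 * m : ℕ)) / (1 + x ^ 2)) -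
          (∑ k ∈ Finset.range (2 * m),
            e ^ (α - (2 * m : ℕ) + k) *
              iteratedDeriv k (fun x : ℝ => 1 / (1 + x ^ 2)) 0 /
                ((k.factorial : ℝ) * (((2 * m : ℕ) : ℝ) - α - k)))
        = (-1:ℝ)^m * ∫ x in Ioi e, x^(α-1)/(1+x^2) := by
    intro e he
    have hexp := expand_int α hα1 m he m le_rfl
    rw [show α - 1 - 2*(m:ℝ) + 2*(m:ℝ) = α - 1 by ring] at hexp
    rw [show (α - 1 - ((2 * m : ℕ) : ℝ)) = α - 1 - 2*(m:ℝ) by push_cast; ring,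
      hexp, sum_eq α m e]
    ring
  have h1 : Tendsto (fun e : ℝ => (-1:ℝ)^m * ∫ x in Ioi e, x^(α-1)/(1+x^2))
      (𝓝[>] (0:ℝ)) (𝓝 ((-1:ℝ)^m * ((π/2) / Real.sin (π * α / 2)))) :=
    (tendsto_tail α hα0 hα1).const_mul _
  rw [show ((-1:ℝ)^m * (π/2) / Real.sin (π * α / 2))
      = (-1:ℝ)^m * ((π/2) / Real.sin (π * α / 2)) by ring]
  apply h1.congr'
  filter_upwards [self_mem_nhdsWithin] with e he
  exact (key e he).symm
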